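/- Let m ≥ 1 with 2^{m+1} dividing N, and let ψ ∈ Π[N] be a signal whose 2^m-sample shifts {ψ[·−2^m l] : l = 0,…,N/2^m−1} are orthonormal. Define ψ′_μ[n] = Σ_{k=0}^{N/2^m−1} h^μ[k]·ψ[n−2^m k] for μ = 0,1, where h^μ is the N/2^m-periodic filter whose DFT (of length N/2^m) is ĥ^0[n] = β[2^m n] and ĥ^1[n] = α[2^m n]. Then the 2^{m+1}-sample shifts {ψ′_0[·−2^{m+1} l] : l = 0,…,N/2^{m+1}−1} are orthonormal, the 2^{m+1}-sample shifts of ψ′_1 are orthonormal, and every shift ψ′_0[·−2^{m+1} l] is orthogonal to every shift ψ′_1[·−2^{m+1} p]. -/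

import Mathlib

open Finset

noncomputable def omegaN (N : ℕ) : ℂ := Complex.exp (2 * Real.pi * Complex.I / N)

noncomputable def U4r (N r : ℕ) (n : ℤ) : ℝ :=
  ((Real.cos (Real.pi * n / N)) ^ (4 * r) + (Real.sin (Real.pi * n / N)) ^ (4 * r)) / 2

noncomputable def betaF (N r : ℕ) (n : ℤ) : ℂ :=
  Complex.ofReal ((Real.cos (Real.pi * n / N)) ^ (2 * r) / Real.sqrt (U4r N r n))

noncomputable def alphaF (N r : ℕ) (n : ℤ) : ℂ :=
  omegaN N ^ n * Complex.ofReal ((Real.sin (Real.pi * n / N)) ^ (2 * r) / Real.sqrt (U4r N r n))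

noncomputable def psi0 (N r : ℕ) (k : ℤ) : ℂ :=
  (N : ℂ)⁻¹ * ∑ n ∈ Finset.range N, omegaN N ^ (k * (n : ℤ)) * betaF N r n

noncomputable def psi1 (N r : ℕ) (k : ℤ) : ℂ :=
  (N : ℂ)⁻¹ * ∑ n ∈ Finset.range N, omegaN N ^ (k * (n : ℤ)) * alphaF N r n

noncomputable def ip (N : ℕ) (x y : ℤ → ℂ) : ℂ :=
  ∑ k ∈ Finset.range N, x k * (starRingEnd ℂ) (y k)

/-- The N/2^m-periodic filter h^μ whose (length N/2^m) DFT is ĥ⁰[n] = β[2^m n],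
ĥ¹[n] = α[2^m n]; given here through the inverse DFT, with ω_{N/2^m} = ω_N^{2^m}. -/
noncomputable def hfil (N r m : ℕ) (μ : Fin 2) (k : ℤ) : ℂ :=
  ((N / 2 ^ m : ℕ) : ℂ)⁻¹ * ∑ n ∈ Finset.range (N / 2 ^ m),
    omegaN N ^ ((2 ^ m : ℤ) * k * (n : ℤ)) *
      (if μ.val = 0 then betaF N r ((2 ^ m : ℤ) * n) else alphaF N r ((2 ^ m : ℤ) * n))

lemma omegaN_zpow (N : ℕ) (z : ℤ) :
    omegaN N ^ z = Complex.exp (z * (2 * Real.pi * Complex.I / N)) := by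
  rw [omegaN, ← Complex.exp_int_mul]

lemma U4r_pos (N r : ℕ) (n : ℤ) : 0 < U4r N r n := by
  unfold U4r
  have h := Real.sin_sq_add_cos_sq (Real.pi * n / N)
  set c := Real.cos (Real.pi * n / N) with hc
  set s := Real.sin (Real.pi * n / N) with hs
  have hcs : c ≠ 0 ∨ s ≠ 0 := by
    by_contra hcon
    push_neg at hcon
    rw [hcon.1, hcon.2] at h
    norm_num at h
  have key : ∀ x : ℝ, x ≠ 0 → 0 < x ^ (4 * r) := by
    intro x hx
    have : x ^ (4 * r) = (x ^ 2) ^ (2 * r) := by ring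
    rw [this]
    exact pow_pos (by positivity) _
  rcases hcs with h1 | h1
  · have := key c h1
    have h2 : 0 ≤ s ^ (4 * r) := by
      rw [show 4 * r = 2 * (2 * r) by ring, pow_mul]; positivity
    linarith
  · have := key s h1
    have h2 : 0 ≤ c ^ (4 * r) := by
      rw [show 4 * r = 2 * (2 * r) by ring, pow_mul]; positivity
    linarith

lemma arg_shift (N K : ℕ) (hN : 0 < N) (hK : 2 * K = N) (q : ℤ) :
    Real.pi * ((q : ℝ) + (K : ℝ)) / N = Real.pi * q / N + Real.pi / 2 := by
  have hNne : (N : ℝ) ≠ 0 := Nat.cast_ne_zero.2 hN.ne'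
  have h2 : (2 : ℝ) * K = N := by exact_mod_cast congrArg (Nat.cast : ℕ → ℝ) hK
  have hKpos : 0 < K := by omega
  have hKne : (K : ℝ) ≠ 0 := Nat.cast_ne_zero.2 hKpos.ne'
  rw [← h2]
  field_simp

lemma U4r_shift (N r K : ℕ) (hN : 0 < N) (hK : 2 * K = N) (q : ℤ) :
    U4r N r (q + (K : ℤ)) = U4r N r q := by
  unfold U4r
  have h : ((q + (K:ℤ) : ℤ) : ℝ) = (q : ℝ) + (K : ℝ) := by push_cast; ring
  rw [h, arg_shift N K hN hK q, Real.cos_add_pi_div_two, Real.sin_add_pi_div_two]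
  rw [show 4 * r = 2 * (2 * r) by ring, pow_mul, pow_mul, pow_mul, pow_mul, neg_sq]
  ring

lemma betaF_shift (N r K : ℕ) (hN : 0 < N) (hK : 2 * K = N) (q : ℤ) :
    betaF N r (q + (K : ℤ)) =
      Complex.ofReal ((Real.sin (Real.pi * q / N)) ^ (2 * r) / Real.sqrt (U4r N r q)) := by
  unfold betaF
  have h : ((q + (K:ℤ) : ℤ) : ℝ) = (q : ℝ) + (K : ℝ) := by push_cast; ring
  rw [U4r_shift N r K hN hK q, h, arg_shift N K hN hK q, Real.cos_add_pi_div_two]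
  rw [show 2 * r = 2 * r by rfl]
  congr 2
  rw [show 2 * r = 2 * r by rfl]
  rw [neg_pow, Even.neg_one_pow ⟨r, by ring⟩, one_mul]

lemma omegaN_pow_K (N K : ℕ) (hN : 0 < N) (hK : 2 * K = N) :
    omegaN N ^ (K : ℤ) = -1 := by
  rw [omegaN_zpow]
  have hNne : (N : ℝ) ≠ 0 := Nat.cast_ne_zero.2 hN.ne'
  have h2 : (2 : ℝ) * K = N := by exact_mod_cast congrArg (Nat.cast : ℕ → ℝ) hK
  have hKC : (2 : ℂ) * K = N := by exact_mod_cast congrArg (Complex.ofReal) h2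
  have : ((K : ℤ) : ℂ) * (2 * Real.pi * Complex.I / N) = Real.pi * Complex.I := by
    have hNc : (N : ℂ) ≠ 0 := Nat.cast_ne_zero.2 hN.ne'
    field_simp
    push_cast
    linear_combination hKC
  rw [this, Complex.exp_pi_mul_I]

lemma alphaF_shift (N r K : ℕ) (hN : 0 < N) (hK : 2 * K = N) (q : ℤ) :
    alphaF N r (q + (K : ℤ)) =
      -(omegaN N ^ q) *
        Complex.ofReal ((Real.cos (Real.pi * q / N)) ^ (2 * r) / Real.sqrt (U4r N r q)) := by
  unfold alphaF
  have h : ((q + (K:ℤ) : ℤ) : ℝ) = (q : ℝ) + (K : ℝ) := by push_cast; ring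
  have hne : omegaN N ≠ 0 := by rw [omegaN]; exact Complex.exp_ne_zero _
  have hzp : omegaN N ^ (q + (K : ℤ)) = -(omegaN N ^ q) := by
    rw [zpow_add₀ hne, omegaN_pow_K N K hN hK]
    ring
  rw [U4r_shift N r K hN hK q, h, arg_shift N K hN hK q, Real.sin_add_pi_div_two, hzp]

lemma conj_omegaN_zpow (N : ℕ) (z : ℤ) :
    (starRingEnd ℂ) (omegaN N ^ z) = omegaN N ^ (-z) := by
  rw [omegaN_zpow, omegaN_zpow, ← Complex.exp_conj]
  congr 1
  simp [map_div₀, map_mul, Complex.conj_I, map_ofNat]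
  ring

lemma pairing (N r K : ℕ) (hN : 0 < N) (hK : 2 * K = N) (q : ℤ) (μ ν : Fin 2) :
    (if μ.val = 0 then betaF N r q else alphaF N r q) *
        (starRingEnd ℂ) (if ν.val = 0 then betaF N r q else alphaF N r q) +
      (if μ.val = 0 then betaF N r (q + (K : ℤ)) else alphaF N r (q + (K : ℤ))) *
        (starRingEnd ℂ)
          (if ν.val = 0 then betaF N r (q + (K : ℤ)) else alphaF N r (q + (K : ℤ))) =
      if μ = ν then 2 else 0 := by
  have hu : 0 < U4r N r q := U4r_pos N r q
  set c := (Real.cos (Real.pi * q / N)) ^ (2 * r) with hc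
  set s := (Real.sin (Real.pi * q / N)) ^ (2 * r) with hs
  set u := U4r N r q with hud
  have hrt : Real.sqrt u ≠ 0 := by positivity
  have hsq : Real.sqrt u * Real.sqrt u = u := Real.mul_self_sqrt hu.le
  have hcs : c ^ 2 + s ^ 2 = 2 * u := by
    rw [hc, hs, hud]
    unfold U4r
    rw [← pow_mul, ← pow_mul]
    rw [show 2 * r * 2 = 4 * r by ring]
    ring
  have key1 : c / Real.sqrt u * (c / Real.sqrt u) + s / Real.sqrt u * (s / Real.sqrt u)
      = 2 := by
    field_simp
    linear_combination hcs - 2 * hsq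
  have hne : omegaN N ≠ 0 := by rw [omegaN]; exact Complex.exp_ne_zero _
  have hA : omegaN N ^ q * (starRingEnd ℂ) (omegaN N ^ q) = 1 := by
    rw [conj_omegaN_zpow, ← zpow_add₀ hne, add_neg_cancel, zpow_zero]
  have hbq : betaF N r q = Complex.ofReal (c / Real.sqrt u) := rfl
  have haq : alphaF N r q = omegaN N ^ q * Complex.ofReal (s / Real.sqrt u) := rfl
  have hbs : betaF N r (q + (K : ℤ)) = Complex.ofReal (s / Real.sqrt u) := by
    rw [betaF_shift N r K hN hK q, ← hs, ← hud]
  have has : alphaF N r (q + (K : ℤ)) = -(omegaN N ^ q) * Complex.ofReal (c / Real.sqrt u) := by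
    rw [alphaF_shift N r K hN hK q, ← hc, ← hud]
  have key2 : (Complex.ofReal (c / Real.sqrt u)) * (Complex.ofReal (c / Real.sqrt u)) +
      (Complex.ofReal (s / Real.sqrt u)) * (Complex.ofReal (s / Real.sqrt u)) = 2 := by
    rw [← Complex.ofReal_mul, ← Complex.ofReal_mul, ← Complex.ofReal_add, key1]
    norm_num
  fin_cases μ <;> fin_cases ν <;>
      simp only [Fin.val_zero, Fin.val_one, Fin.isValue, if_true, if_false, reduceIte,
        Nat.one_ne_zero, Fin.mk_zero, Fin.mk_one]
  · rw [hbq, hbs]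
    simp only [Complex.conj_ofReal]
    exact key2
  · rw [hbq, haq, hbs, has, if_neg (by decide)]
    simp only [map_mul, map_neg, Complex.conj_ofReal]
    ring
  · rw [hbq, haq, hbs, has, if_neg (by decide)]
    simp only [map_mul, map_neg, Complex.conj_ofReal]
    ring
  · rw [haq, has]
    simp only [map_mul, map_neg, Complex.conj_ofReal]
    linear_combination (Complex.ofReal (s / Real.sqrt u) * Complex.ofReal (s / Real.sqrt u)
      + Complex.ofReal (c / Real.sqrt u) * Complex.ofReal (c / Real.sqrt u)) * hA + key2

lemma omegaN_zpow_eq_one_iff (N : ℕ) (hN : 0 < N) (z : ℤ) :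
    omegaN N ^ z = 1 ↔ (N : ℤ) ∣ z := by
  rw [omegaN_zpow, Complex.exp_eq_one_iff]
  have hNne : (N : ℂ) ≠ 0 := Nat.cast_ne_zero.2 hN.ne'
  have h2pi : (2 * (Real.pi:ℂ) * Complex.I) ≠ 0 := by
    simp [Real.pi_ne_zero, Complex.I_ne_zero]
  constructor
  · rintro ⟨n, hn⟩
    refine ⟨n, ?_⟩
    have h : (z : ℂ) = N * n := by
      field_simp at hn
      linear_combination hn
    exact_mod_cast h
  · rintro ⟨n, rfl⟩
    refine ⟨n, ?_⟩
    push_cast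
    field_simp

lemma omegaN_zpow_congr (N : ℕ) (hN : 0 < N) {a b : ℤ} (h : (N : ℤ) ∣ (a - b)) :
    omegaN N ^ a = omegaN N ^ b := by
  have h1 : omegaN N ^ (a - b) = 1 := (omegaN_zpow_eq_one_iff N hN _).2 h
  have hne : omegaN N ≠ 0 := Complex.exp_ne_zero _
  calc omegaN N ^ a = omegaN N ^ (b + (a - b)) := by ring_nf
    _ = omegaN N ^ b * omegaN N ^ (a - b) := zpow_add₀ hne _ _
    _ = omegaN N ^ b := by rw [h1, mul_one]

lemma rootsum (x : ℂ) (M : ℕ) (hx : x ^ M = 1) :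
    ∑ k ∈ range M, x ^ k = if x = 1 then (M : ℂ) else 0 := by
  split_ifs with h
  · simp [h]
  · rw [geom_sum_eq h, hx]
    simp

lemma hfil_congr (N r m : ℕ) (hNpos : 0 < N) (hMN : 2 ^ m * (N / 2 ^ m) = N) (μ : Fin 2)
    (a b : ℤ) (h : ((N / 2 ^ m : ℕ) : ℤ) ∣ (a - b)) : hfil N r m μ a = hfil N r m μ b := by
  unfold hfil
  congr 1
  refine Finset.sum_congr rfl fun n _ => ?_
  congr 1
  apply omegaN_zpow_congr N hNpos
  rcases h with ⟨t, ht⟩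
  refine ⟨t * n, ?_⟩
  have hNe : ((2:ℤ) ^ m) * ((N / 2 ^ m : ℕ) : ℤ) = (N : ℤ) := by exact_mod_cast hMN
  calc (2:ℤ) ^ m * a * n - 2 ^ m * b * n = 2 ^ m * (a - b) * n := by ring
    _ = 2 ^ m * (((N / 2 ^ m : ℕ) : ℤ) * t) * n := by rw [ht]
    _ = (N : ℤ) * (t * n) := by rw [← hNe]; ring

lemma ksum (N m M : ℕ) (hNpos : 0 < N) (hMN : 2 ^ m * M = N) (n n' : ℕ)
    (hn : n < M) (hn' : n' < M) :
    ∑ k ∈ Finset.range M,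
      omegaN N ^ ((2 ^ m : ℤ) * k * n) * omegaN N ^ (-((2 ^ m : ℤ) * k * n')) =
    if n = n' then (M : ℂ) else 0 := by
  have hne : omegaN N ≠ 0 := by rw [omegaN]; exact Complex.exp_ne_zero _
  have hNe : ((2:ℤ) ^ m) * (M : ℤ) = (N : ℤ) := by exact_mod_cast hMN
  have hcomb : ∀ k : ℕ, omegaN N ^ ((2 ^ m : ℤ) * k * n) * omegaN N ^ (-((2 ^ m : ℤ) * k * n'))
      = (omegaN N ^ ((2 ^ m : ℤ) * ((n : ℤ) - n'))) ^ k := by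
    intro k
    rw [← zpow_natCast (omegaN N ^ ((2 ^ m : ℤ) * ((n : ℤ) - n'))) k, ← zpow_mul,
      ← zpow_add₀ hne]
    congr 1
    push_cast
    ring
  simp only [hcomb]
  rw [rootsum _ M (by
    rw [← zpow_natCast (omegaN N ^ ((2 ^ m : ℤ) * ((n : ℤ) - n'))) M, ← zpow_mul]
    exact (omegaN_zpow_eq_one_iff N hNpos _).2 ⟨(n : ℤ) - n', by rw [← hNe]; ring⟩)]
  by_cases hnn : n = n'
  · subst hnn
    rw [if_pos rfl, if_pos (by simp)]
  · rw [if_neg hnn, if_neg]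
    intro hcon
    have hdvd : (N : ℤ) ∣ (2 ^ m : ℤ) * ((n : ℤ) - n') := (omegaN_zpow_eq_one_iff N hNpos _).1 hcon
    rw [← hNe] at hdvd
    have h2 : (M : ℤ) ∣ ((n : ℤ) - n') :=
      (mul_dvd_mul_iff_left (by positivity : ((2:ℤ) ^ m) ≠ 0)).1 hdvd
    have h3 : ((n : ℤ) - n') = 0 := by
      refine Int.eq_zero_of_dvd_of_natAbs_lt_natAbs h2 ?_
      simp only [Int.natAbs_natCast]
      omega
    exact hnn (by omega)

/-- If the 2^m-sample shifts of ψ ∈ Π[N] are orthonormal, then the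
2^{m+1}-sample shifts of ψ′_μ[n] = Σ_k h^μ[k] ψ[n − 2^m k], μ = 0,1, are orthonormal and
the shifts of ψ′₀ are orthogonal to those of ψ′₁. -/
theorem stmt_4 (j r m : ℕ) (hj : 3 ≤ j) (hr : 1 ≤ r) (hm : 1 ≤ m) (hmj : m + 1 ≤ j)
    (N : ℕ) (hN : N = 2 ^ j) (ψ : ℤ → ℂ) (hper : ∀ k : ℤ, ψ (k + N) = ψ k)
    (horth : ∀ l p : ℕ, l < N / 2 ^ m → p < N / 2 ^ m →
      ip N (fun n => ψ (n - 2 ^ m * (l : ℤ))) (fun n => ψ (n - 2 ^ m * (p : ℤ))) =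
        if l = p then 1 else 0) :
    ∀ μ ν : Fin 2, ∀ l p : ℕ, l < N / 2 ^ (m + 1) → p < N / 2 ^ (m + 1) →
      ip N
        (fun n => ∑ k ∈ Finset.range (N / 2 ^ m),
          hfil N r m μ k * ψ (n - 2 ^ (m + 1) * (l : ℤ) - 2 ^ m * (k : ℤ)))
        (fun n => ∑ k ∈ Finset.range (N / 2 ^ m),
          hfil N r m ν k * ψ (n - 2 ^ (m + 1) * (p : ℤ) - 2 ^ m * (k : ℤ))) =
      if μ = ν ∧ l = p then 1 else 0 := by
  intro μ ν l p hl hp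
  -- basic numerology
  have hNpos : 0 < N := by rw [hN]; positivity
  set M : ℕ := N / 2 ^ m with hMdef
  set H : ℕ := N / 2 ^ (m + 1) with hHdef
  have hMN : 2 ^ m * M = N := by
    rw [hMdef, hN]
    rw [Nat.pow_div (by omega) (by norm_num), ← pow_add]
    congr 1
    omega
  have hHN : 2 ^ (m + 1) * H = N := by
    rw [hHdef, hN]
    rw [Nat.pow_div (by omega) (by norm_num), ← pow_add]
    congr 1
    omega
  have hM2H : M = 2 * H := by
    rw [hMdef, hHdef, hN, Nat.pow_div (by omega) (by norm_num),
      Nat.pow_div (by omega) (by norm_num)]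
    rw [show j - m = (j - (m+1)) + 1 by omega]
    ring
  have hHpos : 0 < H := by
    have : 2 ^ (m+1) * H = N := hHN
    by_contra h
    push_neg at h
    interval_cases H <;> omega
  have hMpos : 0 < M := by omega
  have hMC : (M : ℂ) ≠ 0 := Nat.cast_ne_zero.2 hMpos.ne'
  have hne : omegaN N ≠ 0 := by rw [omegaN]; exact Complex.exp_ne_zero _
  -- periodicity of ψ in both directions
  have hper2 : ∀ (t : ℤ) (x : ℤ), ψ (x + N * t) = ψ x := by
    intro t
    induction t using Int.induction_on with
    | zero => simp
    | succ k ih =>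
        intro x
        have h1 : x + N * ((k : ℤ) + 1) = (x + N * k) + N := by ring
        rw [h1, hper, ih]
    | pred k ih =>
        intro x
        have h1 : x + N * (-(k : ℤ) - 1) + N = x + N * (-(k : ℤ)) := by ring
        have := hper (x + N * (-(k : ℤ) - 1))
        rw [h1] at this
        rw [← this, ih]
  -- reduce shifts mod M
  have hred : ∀ (a : ℕ) (n : ℤ), ψ (n - 2 ^ m * (a : ℤ)) = ψ (n - 2 ^ m * ((a % M : ℕ) : ℤ)) := by
    intro a n
    have hsplit : n - 2 ^ m * (a : ℤ) = (n - 2 ^ m * ((a % M : ℕ) : ℤ)) + N * (-((a / M : ℕ) : ℤ)) := by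
      have h1 : (a % M : ℕ) + M * (a / M) = a := Nat.mod_add_div a M
      have h2 : ((a % M : ℕ) : ℤ) + (M : ℤ) * ((a / M : ℕ) : ℤ) = (a : ℤ) := by exact_mod_cast h1
      have h3 : ((2:ℤ) ^ m) * (M : ℤ) = (N : ℤ) := by exact_mod_cast hMN
      linear_combination (2:ℤ)^m * h2 - ((a / M : ℕ) : ℤ) * h3
    rw [hsplit, hper2]
  have L2 : ∀ a b : ℕ, ip N (fun n => ψ (n - 2 ^ m * (a : ℤ))) (fun n => ψ (n - 2 ^ m * (b : ℤ)))
      = if a % M = b % M then 1 else 0 := by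
    intro a b
    have e1 : (fun n : ℤ => ψ (n - 2 ^ m * (a : ℤ))) = fun n => ψ (n - 2 ^ m * ((a % M : ℕ) : ℤ)) :=
      funext fun n => hred a n
    have e2 : (fun n : ℤ => ψ (n - 2 ^ m * (b : ℤ))) = fun n => ψ (n - 2 ^ m * ((b % M : ℕ) : ℤ)) :=
      funext fun n => hred b n
    rw [e1, e2]
    exact horth (a % M) (b % M) (Nat.mod_lt _ hMpos) (Nat.mod_lt _ hMpos)
  -- expansion of the inner product
  have expand : ip N
      (fun n => ∑ k ∈ Finset.range M,
        hfil N r m μ k * ψ (n - 2 ^ (m + 1) * (l : ℤ) - 2 ^ m * (k : ℤ)))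
      (fun n => ∑ k ∈ Finset.range M,
        hfil N r m ν k * ψ (n - 2 ^ (m + 1) * (p : ℤ) - 2 ^ m * (k : ℤ)))
    = ∑ k ∈ Finset.range M, ∑ k' ∈ Finset.range M,
        hfil N r m μ k * (starRingEnd ℂ) (hfil N r m ν k') *
          ip N (fun n => ψ (n - 2 ^ m * ((2 * l + k : ℕ) : ℤ)))
               (fun n => ψ (n - 2 ^ m * ((2 * p + k' : ℕ) : ℤ))) := by
    unfold ip
    have h1 : ∀ n : ℤ,
        (∑ k ∈ Finset.range M, hfil N r m μ k * ψ (n - 2 ^ (m + 1) * (l : ℤ) - 2 ^ m * (k : ℤ))) *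
          (starRingEnd ℂ) (∑ k' ∈ Finset.range M,
            hfil N r m ν k' * ψ (n - 2 ^ (m + 1) * (p : ℤ) - 2 ^ m * (k' : ℤ)))
        = ∑ k ∈ Finset.range M, ∑ k' ∈ Finset.range M,
            (hfil N r m μ k * (starRingEnd ℂ) (hfil N r m ν k')) *
              (ψ (n - 2 ^ m * ((2 * l + k : ℕ) : ℤ)) *
                (starRingEnd ℂ) (ψ (n - 2 ^ m * ((2 * p + k' : ℕ) : ℤ)))) := by
      intro n
      rw [map_sum, Finset.sum_mul_sum]
      refine Finset.sum_congr rfl fun k _ => Finset.sum_congr rfl fun k' _ => ?_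
      have ha : n - 2 ^ (m + 1) * (l : ℤ) - 2 ^ m * (k : ℤ) = n - 2 ^ m * ((2 * l + k : ℕ) : ℤ) := by
        push_cast; ring
      have hb : n - 2 ^ (m + 1) * (p : ℤ) - 2 ^ m * (k' : ℤ) = n - 2 ^ m * ((2 * p + k' : ℕ) : ℤ) := by
        push_cast; ring
      rw [ha, hb, map_mul]
      ring
    calc (∑ n ∈ Finset.range N,
          (∑ k ∈ Finset.range M, hfil N r m μ k * ψ ((n:ℤ) - 2 ^ (m + 1) * (l : ℤ) - 2 ^ m * (k : ℤ))) *
            (starRingEnd ℂ) (∑ k' ∈ Finset.range M,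
              hfil N r m ν k' * ψ ((n:ℤ) - 2 ^ (m + 1) * (p : ℤ) - 2 ^ m * (k' : ℤ))))
        = ∑ n ∈ Finset.range N, ∑ k ∈ Finset.range M, ∑ k' ∈ Finset.range M,
            (hfil N r m μ k * (starRingEnd ℂ) (hfil N r m ν k')) *
              (ψ ((n:ℤ) - 2 ^ m * ((2 * l + k : ℕ) : ℤ)) *
                (starRingEnd ℂ) (ψ ((n:ℤ) - 2 ^ m * ((2 * p + k' : ℕ) : ℤ)))) := by
          exact Finset.sum_congr rfl fun n _ => h1 (n : ℤ)
      _ = ∑ k ∈ Finset.range M, ∑ k' ∈ Finset.range M, ∑ n ∈ Finset.range N,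
            (hfil N r m μ k * (starRingEnd ℂ) (hfil N r m ν k')) *
              (ψ ((n:ℤ) - 2 ^ m * ((2 * l + k : ℕ) : ℤ)) *
                (starRingEnd ℂ) (ψ ((n:ℤ) - 2 ^ m * ((2 * p + k' : ℕ) : ℤ)))) := by
          rw [Finset.sum_comm]
          exact Finset.sum_congr rfl fun k _ => Finset.sum_comm
      _ = ∑ k ∈ Finset.range M, ∑ k' ∈ Finset.range M,
            hfil N r m μ k * (starRingEnd ℂ) (hfil N r m ν k') *
              ∑ n ∈ Finset.range N,
                ψ ((n:ℤ) - 2 ^ m * ((2 * l + k : ℕ) : ℤ)) *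
                  (starRingEnd ℂ) (ψ ((n:ℤ) - 2 ^ m * ((2 * p + k' : ℕ) : ℤ))) := by
          exact Finset.sum_congr rfl fun k _ => Finset.sum_congr rfl fun k' _ =>
            (Finset.mul_sum _ _ _).symm
  rw [expand]
  simp only [L2]
  set D : ℕ := 2 * l + (M - 2 * p) with hD
  have h2p : 2 * p ≤ M := by omega
  have hmodiff : ∀ k k' : ℕ, k' < M →
      ((2 * l + k) % M = (2 * p + k') % M ↔ k' = (k + D) % M) := by
    intro k k' hk'
    constructor
    · intro h
      have h1 : (2 * l + k + (M - 2 * p)) % M = (2 * p + k' + (M - 2 * p)) % M :=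
        Nat.ModEq.add_right _ h
      have h2 : 2 * p + k' + (M - 2 * p) = k' + M := by omega
      have h3 : 2 * l + k + (M - 2 * p) = k + D := by omega
      rw [h2, h3, Nat.add_mod_right, Nat.mod_eq_of_lt hk'] at h1
      exact h1.symm
    · intro h
      rw [h]
      have e1 : (2 * p + (k + D) % M) % M = (2 * p + (k + D)) % M :=
        Nat.ModEq.add_left _ (Nat.mod_modEq _ _)
      have e2 : 2 * p + (k + D) = (2 * l + k) + M := by omega
      rw [e1, e2, Nat.add_mod_right]
  have collapse : ∀ k : ℕ, (∑ k' ∈ Finset.range M,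
      hfil N r m μ k * (starRingEnd ℂ) (hfil N r m ν k') *
        (if (2 * l + k) % M = (2 * p + k') % M then (1:ℂ) else 0))
      = hfil N r m μ k * (starRingEnd ℂ) (hfil N r m ν (((k + D) % M : ℕ) : ℤ)) := by
    intro k
    rw [Finset.sum_eq_single ((k + D) % M)]
    · rw [if_pos ((hmodiff k _ (Nat.mod_lt _ hMpos)).2 rfl), mul_one]
    · intro k' hk' hne'
      rw [if_neg, mul_zero]
      intro hcon
      exact hne' ((hmodiff k k' (Finset.mem_range.1 hk')).1 hcon)
    · intro hk
      exact absurd (Finset.mem_range.2 (Nat.mod_lt _ hMpos)) hk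
  simp only [collapse]
  -- replace (k+D) % M by k + D using M-periodicity of hfil
  have hMNraw : 2 ^ m * (N / 2 ^ m) = N := by rw [← hMdef]; exact hMN
  have hshift : ∀ k : ℕ, hfil N r m ν (((k + D) % M : ℕ) : ℤ)
      = hfil N r m ν ((k : ℤ) + (D : ℤ)) := by
    intro k
    apply hfil_congr N r m hNpos hMNraw ν
    rw [← hMdef]
    refine ⟨-(((k + D) / M : ℕ) : ℤ), ?_⟩
    have h1 : ((k + D) % M + M * ((k + D) / M) : ℕ) = k + D := Nat.mod_add_div _ _
    have h2 : (((k + D) % M : ℕ) : ℤ) + (M : ℤ) * (((k + D) / M : ℕ) : ℤ)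
        = (k : ℤ) + (D : ℤ) := by exact_mod_cast h1
    linear_combination h2
  simp only [hshift]
  -- Fourier expansion of the correlation sum
  set G : Fin 2 → ℕ → ℂ := fun τ n =>
    if τ.val = 0 then betaF N r ((2 ^ m : ℤ) * n) else alphaF N r ((2 ^ m : ℤ) * n) with hG
  have hfil_eq : ∀ (τ : Fin 2) (a : ℤ), hfil N r m τ a
      = (M : ℂ)⁻¹ * ∑ n ∈ Finset.range M, omegaN N ^ ((2 ^ m : ℤ) * a * n) * G τ n := by
    intro τ a
    unfold hfil
    rw [← hMdef]
  have hconj : ∀ a : ℤ, (starRingEnd ℂ) (hfil N r m ν a)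
      = (M : ℂ)⁻¹ * ∑ n ∈ Finset.range M,
          omegaN N ^ (-((2 ^ m : ℤ) * a * n)) * (starRingEnd ℂ) (G ν n) := by
    intro a
    rw [hfil_eq ν a, map_mul, map_inv₀, map_natCast, map_sum]
    congr 1
    exact Finset.sum_congr rfl fun n _ => by rw [map_mul, conj_omegaN_zpow]
  have hA : ∀ k : ℕ, hfil N r m μ (k : ℤ) * (starRingEnd ℂ) (hfil N r m ν ((k : ℤ) + (D : ℤ)))
      = (M : ℂ)⁻¹ * (M : ℂ)⁻¹ * ∑ n ∈ Finset.range M, ∑ n' ∈ Finset.range M,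
          (G μ n * (starRingEnd ℂ) (G ν n')) *
            (omegaN N ^ ((2 ^ m : ℤ) * k * n) *
              omegaN N ^ (-((2 ^ m : ℤ) * ((k : ℤ) + (D : ℤ)) * n'))) := by
    intro k
    rw [hfil_eq μ (k : ℤ), hconj ((k : ℤ) + (D : ℤ)), mul_mul_mul_comm, Finset.sum_mul_sum]
    congr 1
    exact Finset.sum_congr rfl fun n _ => Finset.sum_congr rfl fun n' _ => by ring
  simp only [hA]
  rw [← Finset.mul_sum]
  have hswap : (∑ k ∈ Finset.range M, ∑ n ∈ Finset.range M, ∑ n' ∈ Finset.range M,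
      (G μ n * (starRingEnd ℂ) (G ν n')) *
        (omegaN N ^ ((2 ^ m : ℤ) * k * n) *
          omegaN N ^ (-((2 ^ m : ℤ) * ((k : ℤ) + (D : ℤ)) * n'))))
      = ∑ n ∈ Finset.range M, (G μ n * (starRingEnd ℂ) (G ν n)) *
          ((M : ℂ) * omegaN N ^ (-((2 ^ m : ℤ) * (D : ℤ) * n))) := by
    rw [Finset.sum_comm]
    refine Finset.sum_congr rfl fun n hn => ?_
    rw [Finset.sum_comm]
    have inner : ∀ n' : ℕ, n' ∈ Finset.range M →
        (∑ k ∈ Finset.range M, (G μ n * (starRingEnd ℂ) (G ν n')) *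
          (omegaN N ^ ((2 ^ m : ℤ) * k * n) *
            omegaN N ^ (-((2 ^ m : ℤ) * ((k : ℤ) + (D : ℤ)) * n'))))
        = (G μ n * (starRingEnd ℂ) (G ν n')) *
            ((if n = n' then (M : ℂ) else 0) * omegaN N ^ (-((2 ^ m : ℤ) * (D : ℤ) * n'))) := by
      intro n' hn'
      rw [← Finset.mul_sum]
      congr 1
      have hterm : ∀ k : ℕ, omegaN N ^ ((2 ^ m : ℤ) * k * n) *
          omegaN N ^ (-((2 ^ m : ℤ) * ((k : ℤ) + (D : ℤ)) * n'))
          = (omegaN N ^ ((2 ^ m : ℤ) * k * n) * omegaN N ^ (-((2 ^ m : ℤ) * k * n'))) *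
              omegaN N ^ (-((2 ^ m : ℤ) * (D : ℤ) * n')) := by
        intro k
        rw [← zpow_add₀ hne, ← zpow_add₀ hne, ← zpow_add₀ hne]
        congr 1
        ring
      simp only [hterm]
      rw [← Finset.sum_mul, ksum N m M hNpos hMN n n' (Finset.mem_range.1 hn) (Finset.mem_range.1 hn')]
    rw [Finset.sum_congr rfl inner]
    rw [Finset.sum_eq_single n]
    · rw [if_pos rfl]
    · intro n' _ hnn
      rw [if_neg (fun h => hnn h.symm), zero_mul, mul_zero]
    · intro hcon
      exact absurd hn hcon
  rw [hswap]
  -- split the sum over range M into two halves and apply the pairing identity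
  set K : ℕ := 2 ^ m * H with hKdef
  have hK2 : 2 * K = N := by
    rw [hKdef, ← hHN]
    ring
  set E : ℕ := l + (H - p) with hE
  have hpH : p ≤ H := le_of_lt hp
  have hDE : D = 2 * E := by omega
  have hsplit : ∀ g : ℕ → ℂ, (∑ n ∈ Finset.range M, g n)
      = ∑ n ∈ Finset.range H, g n + ∑ n ∈ Finset.range H, g (H + n) := by
    intro g
    rw [hM2H, two_mul, Finset.range_eq_Ico,
      ← Finset.sum_Ico_consecutive _ (Nat.zero_le H) (by omega : H ≤ H + H)]
    congr 1
    all_goals simp [Finset.sum_Ico_eq_sum_range]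
  rw [hsplit]
  rw [← Finset.sum_add_distrib]
  have hpairn : ∀ n : ℕ, (G μ n * (starRingEnd ℂ) (G ν n)) *
        ((M : ℂ) * omegaN N ^ (-((2 ^ m : ℤ) * (D : ℤ) * n))) +
      (G μ (H + n) * (starRingEnd ℂ) (G ν (H + n))) *
        ((M : ℂ) * omegaN N ^ (-((2 ^ m : ℤ) * (D : ℤ) * ((H + n : ℕ) : ℤ)))) =
      (if μ = ν then 2 else 0) * ((M : ℂ) * omegaN N ^ (-((2 ^ m : ℤ) * (D : ℤ) * n))) := by
    intro n
    have homg : omegaN N ^ (-((2 ^ m : ℤ) * (D : ℤ) * ((H + n : ℕ) : ℤ)))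
        = omegaN N ^ (-((2 ^ m : ℤ) * (D : ℤ) * n)) := by
      apply omegaN_zpow_congr N hNpos
      refine ⟨-(E : ℤ), ?_⟩
      have h1 : (2 : ℤ) * K = N := by exact_mod_cast hK2
      have h2 : ((2 : ℤ)) ^ m * (H : ℤ) = (K : ℤ) := by exact_mod_cast hKdef.symm
      have h3 : (D : ℤ) = 2 * E := by exact_mod_cast hDE
      push_cast
      linear_combination (-(E : ℤ) * h1) + (-(D : ℤ) * h2) - (K:ℤ) * h3
    have hGshift : ∀ τ : Fin 2, G τ (H + n)
        = (if τ.val = 0 then betaF N r ((2 ^ m : ℤ) * n + (K : ℤ))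
            else alphaF N r ((2 ^ m : ℤ) * n + (K : ℤ))) := by
      intro τ
      rw [hG]
      have harg : (2 ^ m : ℤ) * ((H + n : ℕ) : ℤ) = (2 ^ m : ℤ) * n + (K : ℤ) := by
        have h2 : ((2 : ℤ)) ^ m * (H : ℤ) = (K : ℤ) := by exact_mod_cast hKdef.symm
        push_cast
        linear_combination h2
      simp only [harg]
    rw [homg, hGshift μ, hGshift ν]
    have hpr := pairing N r K hNpos hK2 ((2 ^ m : ℤ) * n) μ ν
    rw [hG]
    simp only []
    linear_combination ((M : ℂ) * omegaN N ^ (-((2 ^ m : ℤ) * (D : ℤ) * n))) * hpr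
  rw [Finset.sum_congr rfl (fun n _ => hpairn n)]
  by_cases hμν : μ = ν
  swap
  · rw [if_neg (show ¬(μ = ν ∧ l = p) from fun h => hμν h.1)]
    simp [hμν]
  rw [if_pos hμν]
  -- evaluate the geometric sum
  have hxn : ∀ n : ℕ, omegaN N ^ (-((2 ^ m : ℤ) * (D : ℤ) * n))
      = (omegaN N ^ (-((2 ^ m : ℤ) * (D : ℤ)))) ^ n := by
    intro n
    rw [← zpow_natCast (omegaN N ^ (-((2 ^ m : ℤ) * (D : ℤ)))) n, ← zpow_mul]
    congr 1
    ring
  simp only [hxn]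
  have hxH : (omegaN N ^ (-((2 ^ m : ℤ) * (D : ℤ)))) ^ H = 1 := by
    rw [← zpow_natCast (omegaN N ^ (-((2 ^ m : ℤ) * (D : ℤ)))) H, ← zpow_mul]
    apply (omegaN_zpow_eq_one_iff N hNpos _).2
    refine ⟨-(E : ℤ), ?_⟩
    have h1 : ((2:ℤ) ^ (m+1)) * (H : ℤ) = (N : ℤ) := by exact_mod_cast hHN
    have h3 : (D : ℤ) = 2 * E := by exact_mod_cast hDE
    push_cast
    linear_combination (-(E:ℤ)) * h1 - (2:ℤ)^m * (H:ℤ) * h3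
  have hHC : (H : ℂ) ≠ 0 := Nat.cast_ne_zero.2 hHpos.ne'
  have hMH : (M : ℂ) = 2 * (H : ℂ) := by exact_mod_cast hM2H
  rw [show (∑ n ∈ Finset.range H, (2 : ℂ) *
      ((M : ℂ) * (omegaN N ^ (-((2 ^ m : ℤ) * (D : ℤ)))) ^ n))
      = 2 * (M : ℂ) * ∑ n ∈ Finset.range H, (omegaN N ^ (-((2 ^ m : ℤ) * (D : ℤ)))) ^ n from by
    rw [Finset.mul_sum]
    exact Finset.sum_congr rfl fun n _ => by ring]
  rw [rootsum _ H hxH]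
  by_cases hlp : l = p
  · have hx1 : omegaN N ^ (-((2 ^ m : ℤ) * (D : ℤ))) = 1 := by
      apply (omegaN_zpow_eq_one_iff N hNpos _).2
      refine ⟨-1, ?_⟩
      have h3 : (D : ℤ) = 2 * E := by exact_mod_cast hDE
      have hEH : E = H := by omega
      have h1 : ((2:ℤ) ^ (m+1)) * (H : ℤ) = (N : ℤ) := by exact_mod_cast hHN
      rw [h3, hEH]
      push_cast
      linear_combination (-1 : ℤ) * h1
    rw [if_pos hx1, if_pos (show μ = ν ∧ l = p from ⟨hμν, hlp⟩)]
    field_simp [hMH]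
    linear_combination -hMH
  · have hxne : omegaN N ^ (-((2 ^ m : ℤ) * (D : ℤ))) ≠ 1 := by
      intro hcon
      have hdvd : (N : ℤ) ∣ -((2 ^ m : ℤ) * (D : ℤ)) :=
        (omegaN_zpow_eq_one_iff N hNpos _).1 hcon
      have hdvd2 : (N : ℤ) ∣ ((2 ^ m : ℤ) * (D : ℤ)) := (dvd_neg).1 hdvd
      have hdvd3 : (N : ℕ) ∣ 2 ^ m * D := by exact_mod_cast hdvd2
      rw [hDE, ← hHN] at hdvd3
      have hdvd4 : H ∣ E := by
        have h5 : 2 ^ (m+1) * H ∣ 2 ^ (m+1) * E := by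
          have : 2 ^ m * (2 * E) = 2 ^ (m+1) * E := by ring
          rwa [this] at hdvd3
        exact (mul_dvd_mul_iff_left (by positivity : (2:ℕ) ^ (m+1) ≠ 0)).1 h5
      rcases hdvd4 with ⟨t, ht⟩
      have hEb : 1 ≤ E ∧ E ≤ 2 * H - 1 := by omega
      have : E = H := by
        rcases hEb with ⟨hE1, hE2⟩
        match t, ht with
        | 0, ht => omega
        | 1, ht => omega
        | (t+2), ht =>
          have h6 : H * 2 ≤ H * (t + 2) := Nat.mul_le_mul_left H (by omega)
          omega
      exact hlp (by omega)
    rw [if_neg hxne, if_neg (show ¬(μ = ν ∧ l = p) from fun h => hlp h.2)]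
    simp
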